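/- Let R ≥ 0 be a random variable with density f_R(v) = v^{n-1} g(v²) / ∫_0^∞ t^{n-1} g(t²) dt where g(t) = t^{N-1} e^{-a t^s}/(1 + e^{-b t^s})^{2r}, with 2N + n > 2, a, b, s > 0, r ≥ 0. Then for every real p > 0, E(R^p) = [Γ((1/s)(N + n/2 + p/2 - 1)) Φ*_{2r}(-1, (1/s)(N + n/2 + p/2 - 1), a/b)] / [b^{p/(2s)} Γ((1/s)(N + n/2 - 1)) Φ*_{2r}(-1, (1/s)(N + n/2 - 1), a/b)]. -/

import Mathlib

open MeasureTheory Real Set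

/-- Generalized Hurwitz-Lerch zeta function, integral representation. -/
noncomputable def PhiInt (v z s a : ℝ) : ℝ :=
  (1 / Real.Gamma s) *
    ∫ t in Ioi (0:ℝ), t ^ (s - 1) * Real.exp (-a * t) / (1 - z * Real.exp (-t)) ^ v

/-- The GL density generator. -/
noncomputable def glGen (N a b s r : ℝ) (t : ℝ) : ℝ :=
  t ^ (N - 1) * Real.exp (-a * t ^ s) / (1 + Real.exp (-b * t ^ s)) ^ (2 * r)

lemma phi_eq (σ k r : ℝ) : PhiInt (2*r) (-1) σ k
    = (1 / Real.Gamma σ) * ∫ t in Ioi (0:ℝ),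
        t ^ (σ - 1) * Real.exp (-k * t) / (1 + Real.exp (-t)) ^ (2*r) := by
  unfold PhiInt
  congr 1
  refine setIntegral_congr_fun measurableSet_Ioi (fun t ht => ?_)
  norm_num

lemma intF {σ k r : ℝ} (hσ : 0 < σ) (hk : 0 < k) (hr : 0 ≤ r) :
    IntegrableOn (fun u : ℝ => u ^ (σ - 1) * Real.exp (-k * u) / (1 + Real.exp (-u)) ^ (2*r))
      (Ioi 0) := by
  have hint : IntegrableOn (fun u : ℝ => u ^ (σ - 1) * Real.exp (-k * u ^ (1:ℝ))) (Ioi 0) :=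
    integrableOn_rpow_mul_exp_neg_mul_rpow (by linarith) one_pos hk
  simp only [Real.rpow_one] at hint
  refine hint.mono' ?_ ?_
  · exact ((by fun_prop : Measurable (fun u : ℝ => u ^ (σ - 1) * Real.exp (-k * u) /
      (1 + Real.exp (-u)) ^ (2*r))).aestronglyMeasurable).restrict
  · filter_upwards [self_mem_ae_restrict measurableSet_Ioi] with u hu
    have hu0 : (0:ℝ) < u := hu
    have hden : (1:ℝ) ≤ (1 + Real.exp (-u)) ^ (2*r) :=
      Real.one_le_rpow (by linarith [Real.exp_pos (-u)]) (by linarith)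
    have hnum : (0:ℝ) ≤ u ^ (σ - 1) * Real.exp (-k * u) := by positivity
    rw [Real.norm_eq_abs, abs_of_nonneg (by positivity)]
    calc u ^ (σ - 1) * Real.exp (-k * u) / (1 + Real.exp (-u)) ^ (2*r)
        ≤ u ^ (σ - 1) * Real.exp (-k * u) / 1 := by
          apply div_le_div_of_nonneg_left hnum one_pos hden |>.trans_eq rfl
      _ = u ^ (σ - 1) * Real.exp (-k * u) := by ring

lemma posF {σ k r : ℝ} (hσ : 0 < σ) (hk : 0 < k) (hr : 0 ≤ r) :
    0 < ∫ u in Ioi (0:ℝ), u ^ (σ - 1) * Real.exp (-k * u) / (1 + Real.exp (-u)) ^ (2*r) := by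
  rw [setIntegral_pos_iff_support_of_nonneg_ae ?_ (intF hσ hk hr)]
  · have hsub : Ioi (0:ℝ) ⊆ Function.support
        (fun u : ℝ => u ^ (σ - 1) * Real.exp (-k * u) / (1 + Real.exp (-u)) ^ (2*r)) := by
      intro u hu
      have : (0:ℝ) < u := hu
      exact ne_of_gt (by positivity)
    rw [Set.inter_eq_right.mpr hsub]
    simp [Real.volume_Ioi]
  · filter_upwards [self_mem_ae_restrict measurableSet_Ioi] with u hu
    have : (0:ℝ) < u := hu
    positivity

lemma key (N a b s r c : ℝ) (hb : 0 < b) (hs : 0 < s) :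
    ∫ v in Ioi (0:ℝ), v ^ (c - 1) * glGen N a b s r (v ^ 2)
    = b ^ (-((c + 2*N - 2) / (2*s))) / (2*s) *
      ∫ u in Ioi (0:ℝ), u ^ ((c + 2*N - 2)/(2*s) - 1) * Real.exp (-(a/b) * u) /
        (1 + Real.exp (-u)) ^ (2*r) := by
  set σ := (c + 2*N - 2)/(2*s) with hσdef
  have hs2 : (0:ℝ) < 2*s := by linarith
  have hσs : 2*s*σ = c + 2*N - 2 := by
    rw [hσdef]; field_simp
  set F : ℝ → ℝ := fun u => u ^ (σ - 1) * Real.exp (-(a/b) * u) / (1 + Real.exp (-u)) ^ (2*r)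
    with hF
  have step1 : ∫ v in Ioi (0:ℝ), v ^ (c - 1) * glGen N a b s r (v ^ 2)
      = ∫ v in Ioi (0:ℝ), (b ^ ((1:ℝ) - σ) * (2*s)⁻¹) *
          ((|2*s| * v ^ (2*s - 1)) • F (b * v ^ (2*s))) := by
    refine setIntegral_congr_fun measurableSet_Ioi (fun v hv => ?_)
    have hv0 : (0:ℝ) < v := hv
    have hw0 : (0:ℝ) < v ^ (2*s) := Real.rpow_pos_of_pos hv0 _
    have hv2 : (v:ℝ)^2 = v ^ ((2:ℝ)) := by
      rw [← Real.rpow_natCast v 2]; norm_num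
    have hb1 : b ^ ((1:ℝ) - σ) * b ^ (σ - 1) = 1 := by
      rw [← Real.rpow_add hb]; norm_num
    have hvv : v ^ (c-1) * v ^ (2*(N-1)) = v ^ (2*s-1) * v ^ (2*s*(σ-1)) := by
      rw [← Real.rpow_add hv0, ← Real.rpow_add hv0]
      congr 1; linarith
    simp only [glGen, hF, smul_eq_mul, abs_of_pos hs2]
    rw [hv2, ← Real.rpow_mul hv0.le, ← Real.rpow_mul hv0.le,
      Real.mul_rpow hb.le hw0.le, ← Real.rpow_mul hv0.le]
    rw [show -(a/b) * (b * v ^ (2*s)) = -a * v ^ (2*s) by field_simp]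
    rw [show -b * v ^ (2*s) = -(b * v ^ (2*s)) by ring]
    set E := Real.exp (-a * v ^ (2*s))
    set D := (1 + Real.exp (-(b * v ^ (2*s)))) ^ (2*r)
    rw [show b ^ ((1:ℝ) - σ) * (2*s)⁻¹ * (2*s * v ^ (2*s-1) *
          (b ^ (σ-1) * v ^ (2*s*(σ-1)) * E / D))
        = (b ^ ((1:ℝ)-σ) * b ^ (σ-1)) * ((2*s)⁻¹ * (2*s)) *
          (v ^ (2*s-1) * v ^ (2*s*(σ-1))) * E / D from by ring,
      hb1, inv_mul_cancel₀ hs2.ne', ← hvv]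
    ring
  rw [step1, MeasureTheory.integral_const_mul,
    integral_comp_rpow_Ioi (fun y => F (b * y)) hs2.ne',
    integral_comp_mul_left_Ioi F 0 hb, mul_zero, smul_eq_mul]
  have hbb : b ^ ((1:ℝ) - σ) * b⁻¹ = b ^ (-σ) := by
    rw [← Real.rpow_neg_one b, ← Real.rpow_add hb]
    congr 1; ring
  rw [hF]
  rw [show b ^ ((1:ℝ) - σ) * (2*s)⁻¹ * (b⁻¹ * ∫ u in Ioi (0:ℝ),
        u ^ (σ - 1) * Real.exp (-(a/b) * u) / (1 + Real.exp (-u)) ^ (2*r))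
      = (b ^ ((1:ℝ) - σ) * b⁻¹) * (2*s)⁻¹ * ∫ u in Ioi (0:ℝ),
        u ^ (σ - 1) * Real.exp (-(a/b) * u) / (1 + Real.exp (-u)) ^ (2*r) from by ring,
    hbb]
  ring

/-- Moments of the radial variable R with density ∝ v^{n-1} g(v²) on (0,∞). -/
theorem radial_moment (n : ℕ) (hn : 0 < n) (N a b s r p : ℝ)
    (ha : 0 < a) (hb : 0 < b) (hs : 0 < s) (hr : 0 ≤ r) (hp : 0 < p)
    (hNn : 2 < 2 * N + n) :
    (∫ v in Ioi (0:ℝ), v ^ p * (v ^ ((n : ℝ) - 1) * glGen N a b s r (v ^ 2))) /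
        (∫ t in Ioi (0:ℝ), t ^ ((n : ℝ) - 1) * glGen N a b s r (t ^ 2))
      = Real.Gamma ((1 / s) * (N + (n : ℝ) / 2 + p / 2 - 1)) *
          PhiInt (2 * r) (-1) ((1 / s) * (N + (n : ℝ) / 2 + p / 2 - 1)) (a / b) /
          (b ^ (p / (2 * s)) * Real.Gamma ((1 / s) * (N + (n : ℝ) / 2 - 1)) *
            PhiInt (2 * r) (-1) ((1 / s) * (N + (n : ℝ) / 2 - 1)) (a / b)) := by
  have hn' : (0:ℝ) < n := by exact_mod_cast hn
  have hs2 : (0:ℝ) < 2*s := by linarith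
  have hnum : (∫ v in Ioi (0:ℝ), v ^ p * (v ^ ((n : ℝ) - 1) * glGen N a b s r (v ^ 2)))
      = ∫ v in Ioi (0:ℝ), v ^ (p + (n:ℝ) - 1) * glGen N a b s r (v ^ 2) := by
    refine setIntegral_congr_fun measurableSet_Ioi (fun v hv => ?_)
    have hv0 : (0:ℝ) < v := hv
    rw [show p + (n:ℝ) - 1 = p + ((n:ℝ) - 1) by ring, Real.rpow_add hv0]
    ring
  rw [hnum]
  have k1 := key N a b s r (p + (n:ℝ)) hb hs
  have k0 := key N a b s r ((n:ℝ)) hb hs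
  rw [k1, k0, phi_eq, phi_eq]
  have hσ1eq : (1/s) * (N + (n:ℝ)/2 + p/2 - 1) = (p + (n:ℝ) + 2*N - 2)/(2*s) := by
    field_simp; ring
  have hσ0eq : (1/s) * (N + (n:ℝ)/2 - 1) = ((n:ℝ) + 2*N - 2)/(2*s) := by
    field_simp; ring
  rw [hσ1eq, hσ0eq]
  set σ1 := (p + (n:ℝ) + 2*N - 2)/(2*s) with hσ1
  set σ0 := ((n:ℝ) + 2*N - 2)/(2*s) with hσ0
  set J1 := ∫ u in Ioi (0:ℝ), u ^ (σ1 - 1) * Real.exp (-(a/b) * u) /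
      (1 + Real.exp (-u)) ^ (2*r) with hJ1
  set J0 := ∫ u in Ioi (0:ℝ), u ^ (σ0 - 1) * Real.exp (-(a/b) * u) /
      (1 + Real.exp (-u)) ^ (2*r) with hJ0def
  have hσ0pos : 0 < σ0 := div_pos (by linarith) hs2
  have hσ1pos : 0 < σ1 := div_pos (by linarith) hs2
  have hJ0 : 0 < J0 := posF hσ0pos (div_pos ha hb) hr
  have hΓ0 : 0 < Real.Gamma σ0 := Real.Gamma_pos_of_pos hσ0pos
  have hΓ1 : 0 < Real.Gamma σ1 := Real.Gamma_pos_of_pos hσ1pos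
  have hb0 : 0 < b ^ (-σ0) := Real.rpow_pos_of_pos hb _
  have hbp : 0 < b ^ (p/(2*s)) := Real.rpow_pos_of_pos hb _
  have hbsplit : b ^ (-σ1) = b ^ (-σ0) / b ^ (p/(2*s)) := by
    rw [eq_div_iff hbp.ne', ← Real.rpow_add hb]
    congr 1
    rw [hσ1, hσ0]; ring
  rw [hbsplit]
  field_simp
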